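/- Timmesfeld's group SL₂(L) is a simple group (it is nontrivial and its only normal subgroups are itself and the trivial subgroup). -/

import Mathlib

open Matrix Pointwise

noncomputable section

variable {K : Type*} [Field K]

abbrev SL2 (K : Type*) [Field K] := Matrix.SpecialLinearGroup (Fin 2) K

/-- `a(t) = [[1,t],[0,1]]`. -/
def aMat (t : K) : SL2 K :=
  ⟨!![1, t; 0, 1], by simp [Matrix.det_fin_two_of]⟩

/-- `b(t) = [[1,0],[t,1]]`. -/
def bMat (t : K) : SL2 K :=
  ⟨!![1, 0; t, 1], by simp [Matrix.det_fin_two_of]⟩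

/-- `diag(s) = [[s,0],[0,s⁻¹]]`. -/
def diagMat (s : Kˣ) : SL2 K :=
  ⟨!![(s : K), 0; 0, ((s⁻¹ : Kˣ) : K)], by simp [Matrix.det_fin_two_of]⟩

/-- `w = [[0,1],[1,0]]`, in `SL₂` since `char K = 2`. -/
def wMat (K : Type*) [Field K] [CharP K 2] : SL2 K :=
  ⟨!![0, 1; 1, 0], by simp [Matrix.det_fin_two_of, CharTwo.neg_eq]⟩

def setA (L : AddSubgroup K) : Set (SL2 K) := {g | ∃ t ∈ L, g = aMat t}

def setAop (L : AddSubgroup K) : Set (SL2 K) := {g | ∃ t ∈ L, g = bMat t}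

/-- Timmesfeld's `SL₂(L)`. -/
def SL2L (L : AddSubgroup K) : Subgroup (SL2 K) := Subgroup.closure (setA L ∪ setAop L)

/-- The subgroup of `Kˣ` generated by the nonzero elements of `L`. -/
def Tgen (L : AddSubgroup K) : Subgroup Kˣ := Subgroup.closure {u : Kˣ | (u : K) ∈ L}

def setTL (L : AddSubgroup K) : Set (SL2 K) := {g | ∃ s ∈ Tgen L, g = diagMat s}

def setTK (K : Type*) [Field K] : Set (SL2 K) := {g | ∃ s : Kˣ, g = diagMat s}

def setB (L : AddSubgroup K) : Set (SL2 K) := setTL L * setA L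


section Aux
open scoped commutatorElement
set_option linter.unusedSectionVars false
set_option linter.unreachableTactic false
set_option linter.unusedTactic false
set_option linter.unnecessarySeqFocus false
variable [CharP K 2]

lemma mk2_congr {α : Type*} {a b c d a' b' c' d' : α} (h1 : a = a') (h2 : b = b')
    (h3 : c = c') (h4 : d = d') : !![a, b; c, d] = !![a', b'; c', d'] := by
  subst h1 h2 h3 h4; rfl

lemma two_zero : (2 : K) = 0 := CharTwo.two_eq_zero

lemma aMat_mul (s t : K) : aMat s * aMat t = aMat (s + t) := by
  apply Subtype.ext
  show (!![1, s; 0, 1] : Matrix _ _ K) * !![1, t; 0, 1] = !![1, s + t; 0, 1]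
  rw [Matrix.mul_fin_two]
  refine mk2_congr ?_ ?_ ?_ ?_ <;> ring

lemma aMat_zero : (aMat 0 : SL2 K) = 1 := by
  apply Subtype.ext
  show (!![1, (0:K); 0, 1]) = (1 : Matrix (Fin 2) (Fin 2) K)
  rw [Matrix.eta_fin_two 1]; simp

lemma aMat_inv (t : K) : (aMat t)⁻¹ = aMat t := by
  rw [eq_comm, eq_inv_iff_mul_eq_one, aMat_mul, CharTwo.add_self_eq_zero, aMat_zero]

lemma bMat_mul (s t : K) : bMat s * bMat t = bMat (s + t) := by
  apply Subtype.ext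
  show (!![1, 0; s, 1] : Matrix _ _ K) * !![1, 0; t, 1] = !![1, 0; s + t, 1]
  rw [Matrix.mul_fin_two]
  refine mk2_congr ?_ ?_ ?_ ?_ <;> ring

lemma bMat_zero : (bMat 0 : SL2 K) = 1 := by
  apply Subtype.ext
  show (!![1, (0:K); 0, 1]) = (1 : Matrix (Fin 2) (Fin 2) K)
  rw [Matrix.eta_fin_two 1]; simp

lemma bMat_inv (t : K) : (bMat t)⁻¹ = bMat t := by
  rw [eq_comm, eq_inv_iff_mul_eq_one, bMat_mul, CharTwo.add_self_eq_zero, bMat_zero]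

lemma w_eq : wMat K = aMat 1 * bMat 1 * aMat 1 := by
  apply Subtype.ext
  show (!![0, 1; 1, 0] : Matrix _ _ K) = !![1, 1; 0, 1] * !![1, 0; 1, 1] * !![1, 1; 0, 1]
  rw [Matrix.mul_fin_two, Matrix.mul_fin_two]
  refine mk2_congr ?_ ?_ ?_ ?_ <;>
    first
      | ring1
      | linear_combination (two_zero : (2:K) = 0)
      | linear_combination (-1 : K) * (two_zero : (2:K) = 0)
      | linear_combination (2 : K) * (two_zero : (2:K) = 0)
      | linear_combination (-2 : K) * (two_zero : (2:K) = 0)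

lemma w_mul_w : wMat K * wMat K = 1 := by
  apply Subtype.ext
  show (!![0, 1; 1, 0] : Matrix _ _ K) * !![0, 1; 1, 0] = (1 : Matrix (Fin 2) (Fin 2) K)
  rw [Matrix.mul_fin_two, Matrix.eta_fin_two 1]; simp

lemma w_inv : (wMat K)⁻¹ = wMat K := by
  rw [eq_comm, eq_inv_iff_mul_eq_one, w_mul_w]

lemma w_a_w (t : K) : wMat K * aMat t * wMat K = bMat t := by
  apply Subtype.ext
  show (!![0, 1; 1, 0] : Matrix _ _ K) * !![1, t; 0, 1] * !![0, 1; 1, 0] = !![1, 0; t, 1]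
  rw [Matrix.mul_fin_two, Matrix.mul_fin_two]
  refine mk2_congr ?_ ?_ ?_ ?_ <;> ring

lemma diag_eq (s : K) (hs : s ≠ 0) :
    diagMat (Units.mk0 s hs) = aMat s * bMat s⁻¹ * aMat s * wMat K := by
  apply Subtype.ext
  show (!![s, 0; 0, s⁻¹] : Matrix _ _ K) = !![1, s; 0, 1] * !![1, 0; s⁻¹, 1] * !![1, s; 0, 1] * !![0, 1; 1, 0]
  have h1 : s * s⁻¹ = 1 := mul_inv_cancel₀ hs
  rw [Matrix.mul_fin_two, Matrix.mul_fin_two, Matrix.mul_fin_two]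
  refine mk2_congr ?_ ?_ ?_ ?_ <;>
    first
      | ring1
      | linear_combination (-1 : K) * (two_zero : (2:K) = 0) - h1
      | linear_combination (-s) * (two_zero : (2:K) = 0) - s * h1

variable {L : AddSubgroup K}

lemma mem_L_inv (hvs : ∀ s t : K, t ∈ L → s ^ 2 * t ∈ L) {t : K} (ht : t ∈ L) : t⁻¹ ∈ L := by
  rcases eq_or_ne t 0 with rfl | h
  · simpa using L.zero_mem
  · have : (t⁻¹) ^ 2 * t ∈ L := hvs t⁻¹ t ht
    have e : (t⁻¹) ^ 2 * t = t⁻¹ := by field_simp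
    rwa [e] at this

lemma mem_a {t : K} (ht : t ∈ L) : aMat t ∈ SL2L L :=
  Subgroup.subset_closure (Or.inl ⟨t, ht, rfl⟩)

lemma mem_b {t : K} (ht : t ∈ L) : bMat t ∈ SL2L L :=
  Subgroup.subset_closure (Or.inr ⟨t, ht, rfl⟩)

lemma mem_w (h1 : (1 : K) ∈ L) : wMat K ∈ SL2L L := by
  rw [w_eq]
  exact mul_mem (mul_mem (mem_a h1) (mem_b h1)) (mem_a h1)

lemma mem_diag (h1 : (1 : K) ∈ L) (hvs : ∀ s t : K, t ∈ L → s ^ 2 * t ∈ L)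
    {s : K} (hs : s ∈ L) (hs0 : s ≠ 0) : diagMat (Units.mk0 s hs0) ∈ SL2L L := by
  rw [diag_eq]
  exact mul_mem (mul_mem (mul_mem (mem_a hs) (mem_b (mem_L_inv hvs hs))) (mem_a hs)) (mem_w h1)

/-- directions in the orbit `Ω = L ∪ {∞}` -/
def OmegaV (L : AddSubgroup K) (x y : K) : Prop :=
  (y = 0 ∧ x ≠ 0) ∨ (y ≠ 0 ∧ ∃ t ∈ L, x = t * y)

def PredM (L : AddSubgroup K) (g : Matrix (Fin 2) (Fin 2) K) : Prop :=
  ∀ x y : K, OmegaV L x y → OmegaV L (g 0 0 * x + g 0 1 * y) (g 1 0 * x + g 1 1 * y)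

lemma predM_mul {g h : Matrix (Fin 2) (Fin 2) K} (hg : PredM L g) (hh : PredM L h) :
    PredM L (g * h) := by
  intro x y hxy
  have key := hg _ _ (hh x y hxy)
  have e0 : (g * h) 0 0 * x + (g * h) 0 1 * y
      = g 0 0 * (h 0 0 * x + h 0 1 * y) + g 0 1 * (h 1 0 * x + h 1 1 * y) := by
    simp [Matrix.mul_apply, Fin.sum_univ_two]; ring
  have e1 : (g * h) 1 0 * x + (g * h) 1 1 * y
      = g 1 0 * (h 0 0 * x + h 0 1 * y) + g 1 1 * (h 1 0 * x + h 1 1 * y) := by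
    simp [Matrix.mul_apply, Fin.sum_univ_two]; ring
  rw [e0, e1]
  exact key

lemma predM_one : PredM L (1 : Matrix (Fin 2) (Fin 2) K) := by
  intro x y hxy
  have e0 : (1 : Matrix (Fin 2) (Fin 2) K) 0 0 * x + (1 : Matrix (Fin 2) (Fin 2) K) 0 1 * y = x := by
    simp [Matrix.one_apply]
  have e1 : (1 : Matrix (Fin 2) (Fin 2) K) 1 0 * x + (1 : Matrix (Fin 2) (Fin 2) K) 1 1 * y = y := by
    simp [Matrix.one_apply]
  rw [e0, e1]
  exact hxy

lemma predM_a {t : K} (ht : t ∈ L) : PredM L ((aMat t : SL2 K) : Matrix (Fin 2) (Fin 2) K) := by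
  intro x y hxy
  have e0 : ((aMat t : SL2 K) : Matrix (Fin 2) (Fin 2) K) 0 0 * x
      + ((aMat t : SL2 K) : Matrix (Fin 2) (Fin 2) K) 0 1 * y = x + t * y := by
    show (1 : K) * x + t * y = _; ring
  have e1 : ((aMat t : SL2 K) : Matrix (Fin 2) (Fin 2) K) 1 0 * x
      + ((aMat t : SL2 K) : Matrix (Fin 2) (Fin 2) K) 1 1 * y = y := by
    show (0 : K) * x + 1 * y = _; ring
  rw [e0, e1]
  rcases hxy with ⟨hy, hx⟩ | ⟨hy, t', ht', hx⟩
  · exact Or.inl ⟨hy, by simpa [hy] using hx⟩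
  · exact Or.inr ⟨hy, t' + t, L.add_mem ht' ht, by rw [hx]; ring⟩

lemma predM_b (hvs : ∀ s t : K, t ∈ L → s ^ 2 * t ∈ L) {t : K} (ht : t ∈ L) :
    PredM L ((bMat t : SL2 K) : Matrix (Fin 2) (Fin 2) K) := by
  intro x y hxy
  have e0 : ((bMat t : SL2 K) : Matrix (Fin 2) (Fin 2) K) 0 0 * x
      + ((bMat t : SL2 K) : Matrix (Fin 2) (Fin 2) K) 0 1 * y = x := by
    show (1 : K) * x + 0 * y = _; ring
  have e1 : ((bMat t : SL2 K) : Matrix (Fin 2) (Fin 2) K) 1 0 * x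
      + ((bMat t : SL2 K) : Matrix (Fin 2) (Fin 2) K) 1 1 * y = t * x + y := by
    show t * x + (1 : K) * y = _; ring
  rw [e0, e1]
  rcases hxy with ⟨hy, hx⟩ | ⟨hy, t', ht', hx⟩
  · rcases eq_or_ne t 0 with rfl | ht0
    · exact Or.inl ⟨by rw [hy]; ring, hx⟩
    · refine Or.inr ⟨?_, t⁻¹, mem_L_inv hvs ht, ?_⟩
      · rw [hy]; simpa using mul_ne_zero ht0 hx
      · rw [hy]; field_simp; ring
  · rcases eq_or_ne (t * t' + 1) 0 with h0 | h0
    · refine Or.inl ⟨?_, ?_⟩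
      · rw [hx]; linear_combination y * h0
      · rw [hx]
        have ht'0 : t' ≠ 0 := by
          intro h; rw [h, mul_zero, zero_add] at h0; exact one_ne_zero h0
        exact mul_ne_zero ht'0 hy
    · refine Or.inr ⟨?_, ((t * t' + 1)⁻¹) ^ 2 * (t' + t' ^ 2 * t), ?_, ?_⟩
      · rw [hx]
        intro h
        apply h0
        have : (t * t' + 1) * y = 0 := by linear_combination h
        rcases mul_eq_zero.1 this with h' | h'
        · exact h'
        · exact absurd h' hy
      · exact hvs _ _ (L.add_mem ht' (hvs t' t ht))
      · rw [hx]
        have hinv : (t*t'+1) * (t*t'+1)⁻¹ = 1 := mul_inv_cancel₀ h0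
        linear_combination (-(t' * y) * ((t*t'+1)⁻¹ * (t*t'+1) + 1)) * hinv

lemma predM_of_mem {g : SL2 K} (hvs : ∀ s t : K, t ∈ L → s ^ 2 * t ∈ L)
    (hg : g ∈ SL2L L) : PredM L (g : Matrix (Fin 2) (Fin 2) K) := by
  have main : ∀ x ∈ SL2L L, PredM L ((x : SL2 K) : Matrix (Fin 2) (Fin 2) K)
      ∧ PredM L ((x⁻¹ : SL2 K) : Matrix (Fin 2) (Fin 2) K) := by
    intro x hx
    induction hx using Subgroup.closure_induction with
    | mem g hg =>
      rcases hg with ⟨t, ht, rfl⟩ | ⟨t, ht, rfl⟩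
      · exact ⟨predM_a ht, by rw [aMat_inv]; exact predM_a ht⟩
      · exact ⟨predM_b hvs ht, by rw [bMat_inv]; exact predM_b hvs ht⟩
    | one => exact ⟨by rw [Matrix.SpecialLinearGroup.coe_one]; exact predM_one,
        by rw [inv_one, Matrix.SpecialLinearGroup.coe_one]; exact predM_one⟩
    | mul g h _ _ pg ph =>
      constructor
      · rw [Matrix.SpecialLinearGroup.coe_mul]; exact predM_mul pg.1 ph.1
      · rw [_root_.mul_inv_rev, Matrix.SpecialLinearGroup.coe_mul]; exact predM_mul ph.2 pg.2
    | inv g _ pg => exact ⟨pg.2, by rw [inv_inv]; exact pg.1⟩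
  exact (main g hg).1

/-- The first column of any element of `SL2L L` is a direction in `Ω`. -/
lemma col_omega {g : SL2 K} (hvs : ∀ s t : K, t ∈ L → s ^ 2 * t ∈ L) (hg : g ∈ SL2L L) :
    OmegaV L ((g : Matrix (Fin 2) (Fin 2) K) 0 0) ((g : Matrix (Fin 2) (Fin 2) K) 1 0) := by
  have := predM_of_mem hvs hg 1 0 (Or.inl ⟨rfl, one_ne_zero⟩)
  simpa using this

open Matrix.SpecialLinearGroup in
lemma sl2_eta (g : SL2 K) : ∃ a b c d : K,
    ((g : Matrix (Fin 2) (Fin 2) K) = !![a,b;c,d] ∧ a * d - b * c = 1) := by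
  refine ⟨_, _, _, _, Matrix.eta_fin_two _, ?_⟩
  have h := g.2
  rwa [Matrix.det_fin_two] at h

lemma mul_entry (x y : SL2 K) (i j : Fin 2) :
    ((x * y : SL2 K) : Matrix (Fin 2) (Fin 2) K) i j
      = (x : Matrix (Fin 2) (Fin 2) K) i 0 * (y : Matrix (Fin 2) (Fin 2) K) 0 j
        + (x : Matrix (Fin 2) (Fin 2) K) i 1 * (y : Matrix (Fin 2) (Fin 2) K) 1 j := by
  rw [Matrix.SpecialLinearGroup.coe_mul, Matrix.mul_apply, Fin.sum_univ_two]

lemma w_conj' (a b c d : K) :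
    (!![0,1;1,0] : Matrix (Fin 2) (Fin 2) K) * !![a,b;c,d] * !![0,1;1,0] = !![d,c;b,a] := by
  rw [Matrix.mul_fin_two, Matrix.mul_fin_two]
  refine mk2_congr ?_ ?_ ?_ ?_ <;> ring1

lemma a_conj' (s a b c d : K) :
    (!![1,s;0,1] : Matrix (Fin 2) (Fin 2) K) * !![a,b;c,d] * !![1,s;0,1]
      = !![a + s*c, s*a + s*(s*c) + b + s*d; c, s*c + d] := by
  rw [Matrix.mul_fin_two, Matrix.mul_fin_two]
  refine mk2_congr ?_ ?_ ?_ ?_ <;> ring1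

/-- conjugation of `a(t)` by an upper triangular element of `SL₂`. -/
lemma upper_conj (h : SL2 K) (hc : (h : Matrix (Fin 2) (Fin 2) K) 1 0 = 0) (t : K) :
    h * aMat t * h⁻¹ = aMat (((h : Matrix (Fin 2) (Fin 2) K) 0 0) ^ 2 * t) := by
  obtain ⟨a, b, c, d, hm, hdet⟩ := sl2_eta h
  have hc0 : c = 0 := by rw [hm] at hc; exact hc
  subst hc0
  have had : a * d = 1 := by linear_combination hdet
  apply Subtype.ext
  rw [Matrix.SpecialLinearGroup.coe_mul, Matrix.SpecialLinearGroup.coe_mul,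
    Matrix.SpecialLinearGroup.coe_inv, hm, Matrix.adjugate_fin_two]
  show _ = (!![1, a^2*t; 0, 1] : Matrix (Fin 2) (Fin 2) K)
  show !![a,b;0,d] * !![1,t;0,1] * !![d,-b;-0,a] = _
  rw [Matrix.mul_fin_two, Matrix.mul_fin_two]
  refine mk2_congr ?_ ?_ ?_ ?_ <;> linear_combination (norm := ring_nf) ?_ <;>
    first
      | ring1
      | linear_combination had
      | linear_combination t * a * had + b * had
      | linear_combination (t*a + b) * had

lemma diag_inv (σ : Kˣ) : (diagMat σ)⁻¹ = diagMat σ⁻¹ := by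
  rw [eq_comm, eq_inv_iff_mul_eq_one]
  apply Subtype.ext
  show (!![((σ⁻¹:Kˣ):K), 0; 0, ((σ:Kˣ):K)] : Matrix (Fin 2) (Fin 2) K) * !![(σ:K), 0; 0, ((σ⁻¹:Kˣ):K)] = 1
  rw [Matrix.mul_fin_two, Matrix.eta_fin_two 1]
  have h1 : ((σ⁻¹:Kˣ):K) * (σ:K) = 1 := by
    rw [← Units.val_mul, inv_mul_cancel, Units.val_one]
  have h2 : (σ:K) * ((σ⁻¹:Kˣ):K) = 1 := by
    rw [← Units.val_mul, mul_inv_cancel, Units.val_one]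
  refine mk2_congr ?_ ?_ ?_ ?_ <;> simp [h1, h2]

lemma diag_a_comm (σ : Kˣ) (u : K) :
    ⁅diagMat σ, aMat u⁆ = aMat ((σ:K)^2 * u + u) := by
  rw [commutatorElement_def, diag_inv, aMat_inv]
  apply Subtype.ext
  rw [Matrix.SpecialLinearGroup.coe_mul, Matrix.SpecialLinearGroup.coe_mul,
    Matrix.SpecialLinearGroup.coe_mul]
  show (!![(σ:K), 0; 0, ((σ⁻¹:Kˣ):K)] : Matrix (Fin 2) (Fin 2) K) * !![1, u; 0, 1]
      * !![((σ⁻¹:Kˣ):K), 0; 0, (σ:K)] * !![1, u; 0, 1] = !![1, (σ:K)^2*u + u; 0, 1]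
  have h1 : ((σ⁻¹:Kˣ):K) * (σ:K) = 1 := by
    rw [← Units.val_mul, inv_mul_cancel, Units.val_one]
  have h2 : (σ:K) * ((σ⁻¹:Kˣ):K) = 1 := by
    rw [← Units.val_mul, mul_inv_cancel, Units.val_one]
  rw [Matrix.mul_fin_two, Matrix.mul_fin_two, Matrix.mul_fin_two]
  refine mk2_congr ?_ ?_ ?_ ?_ <;>
    first
      | ring1
      | linear_combination h1
      | linear_combination h2
      | linear_combination u * h2
      | linear_combination (u - ((σ:K))^2 * u) * h2
      | linear_combination u * h1 + ((σ:K))^2 * u * h1 - u * h1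
      | linear_combination ((σ:K))^2 * u * h1

lemma exists_lowleft_ne (h1 : (1:K) ∈ L) {H : Subgroup ↥(SL2L L)} (hH : H.Normal)
    (hne : H ≠ ⊥) :
    ∃ n : ↥(SL2L L), n ∈ H ∧ ((n : SL2 K) : Matrix (Fin 2) (Fin 2) K) 1 0 ≠ 0 := by
  by_contra hcon
  push_neg at hcon
  apply hne
  rw [Subgroup.eq_bot_iff_forall]
  intro n hn
  set wH : ↥(SL2L L) := ⟨wMat K, mem_w h1⟩ with hwH
  set aH : ↥(SL2L L) := ⟨aMat 1, mem_a h1⟩ with haH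
  obtain ⟨a, b, c, d, hm, hdet⟩ := sl2_eta (n : SL2 K)
  have hc : c = 0 := by
    have := hcon n hn; rw [hm] at this; exact this
  subst hc
  -- first conjugation : b = 0
  have e3 : ((wH * n * wH⁻¹ : ↥(SL2L L)) : SL2 K) = wMat K * (n : SL2 K) * wMat K := by
    rw [show ((wH * n * wH⁻¹ : ↥(SL2L L)) : SL2 K) = wMat K * (n : SL2 K) * (wMat K)⁻¹ from rfl,
      w_inv]
  have h2 := hcon (wH * n * wH⁻¹) (hH.conj_mem n hn wH)
  rw [e3] at h2
  have e4 : ((wMat K * (n:SL2 K) * wMat K : SL2 K) : Matrix (Fin 2) (Fin 2) K) = !![d,0;b,a] := by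
    rw [Matrix.SpecialLinearGroup.coe_mul, Matrix.SpecialLinearGroup.coe_mul, hm]
    exact w_conj' a b 0 d
  rw [e4] at h2
  have hb : b = 0 := h2
  subst hb
  -- second conjugation : a = d
  have e5 : ((wH * (aH * n * aH⁻¹) * wH⁻¹ : ↥(SL2L L)) : SL2 K)
      = wMat K * (aMat 1 * (n : SL2 K) * aMat 1) * wMat K := by
    rw [show ((wH * (aH * n * aH⁻¹) * wH⁻¹ : ↥(SL2L L)) : SL2 K)
      = wMat K * (aMat 1 * (n : SL2 K) * (aMat 1)⁻¹) * (wMat K)⁻¹ from rfl, w_inv, aMat_inv]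
  have h3 := hcon (wH * (aH * n * aH⁻¹) * wH⁻¹) (hH.conj_mem _ (hH.conj_mem n hn aH) wH)
  rw [e5] at h3
  have e6 : ((wMat K * (aMat 1 * (n:SL2 K) * aMat 1) * wMat K : SL2 K) : Matrix (Fin 2) (Fin 2) K)
      = !![1*0 + d, 0; 1*a + 1*(1*0) + 0 + 1*d, a + 1*0] := by
    rw [Matrix.SpecialLinearGroup.coe_mul, Matrix.SpecialLinearGroup.coe_mul,
      Matrix.SpecialLinearGroup.coe_mul, Matrix.SpecialLinearGroup.coe_mul, hm]
    show (!![0,1;1,0] : Matrix (Fin 2) (Fin 2) K) * (!![1,1;0,1] * !![a,0;0,d] * !![1,1;0,1])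
        * !![0,1;1,0] = _
    rw [a_conj' 1 a 0 0 d, w_conj']
  rw [e6] at h3
  have had : (1:K)*a + 1*(1*0) + 0 + 1*d = 0 := h3
  -- conclude a = 1, d = 1
  have ha2 : a * a = 1 := by
    have hd : d = a := by linear_combination had - a * (two_zero (K := K))
    rw [hd] at hdet; linear_combination hdet
  have ha : a = 1 := by
    have hsq : (a - 1)^2 = 0 := by
      linear_combination ha2 + (1 - a) * (two_zero (K := K))
    have := pow_eq_zero_iff (n := 2) (by norm_num) |>.mp hsq
    linear_combination this
  have hd1 : d = 1 := by
    have hd : d = a := by linear_combination had - a * (two_zero (K := K))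
    rw [hd, ha]
  apply Subtype.ext
  apply Subtype.ext
  rw [show ((1 : ↥(SL2L L)) : SL2 K) = 1 from rfl]
  rw [show ((1 : SL2 K) : Matrix (Fin 2) (Fin 2) K) = 1 from rfl]
  rw [hm, ha, hd1, Matrix.eta_fin_two 1]
  simp

lemma exists_mul_mem_P (hvs : ∀ s t : K, t ∈ L → s ^ 2 * t ∈ L)
    {H : Subgroup ↥(SL2L L)} (hH : H.Normal) {n₁ : ↥(SL2L L)} (hn₁ : n₁ ∈ H)
    (hc : ((n₁ : SL2 K) : Matrix (Fin 2) (Fin 2) K) 1 0 ≠ 0) (γ : ↥(SL2L L)) :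
    ∃ m ∈ H, (((m * γ : ↥(SL2L L)) : SL2 K) : Matrix (Fin 2) (Fin 2) K) 1 0 = 0 := by
  obtain ⟨a, b, c, d, hm, hdet⟩ := sl2_eta (n₁ : SL2 K)
  have hc' : c ≠ 0 := by rwa [hm] at hc
  -- the slope of the first column of n₁⁻¹ : d = z₀ c with z₀ ∈ L
  have hinvmem : ((n₁ : SL2 K))⁻¹ ∈ SL2L L := inv_mem n₁.2
  have hadj : ((((n₁ : SL2 K))⁻¹ : SL2 K) : Matrix (Fin 2) (Fin 2) K) = !![d, -b; -c, a] := by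
    rw [Matrix.SpecialLinearGroup.coe_inv, hm, Matrix.adjugate_fin_two]
    rfl
  have hcol := col_omega hvs hinvmem
  rw [hadj] at hcol
  have hcol' : OmegaV L d (-c) := hcol
  rcases hcol' with ⟨hneg, -⟩ | ⟨-, z₀, hz₀, hd⟩
  · exact absurd (neg_eq_zero.mp hneg) hc'
  have hd' : d = z₀ * c := by linear_combination hd - z₀ * c * (two_zero (K := K))
  -- the first column of γ
  have hγ := col_omega hvs γ.2
  rcases hγ with ⟨hq0, -⟩ | ⟨hq, t, htL, hp⟩
  · exact ⟨1, H.one_mem, by rw [one_mul]; exact hq0⟩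
  · set s : K := t + z₀ with hs
    have hsL : s ∈ L := L.add_mem htL hz₀
    set aS : ↥(SL2L L) := ⟨aMat s, mem_a hsL⟩ with haS
    have haHinv : aS⁻¹ = aS := by
      apply Subtype.ext
      rw [show ((aS⁻¹ : ↥(SL2L L)) : SL2 K) = (aMat s)⁻¹ from rfl, aMat_inv]
    refine ⟨aS * n₁ * aS, ?_, ?_⟩
    · rw [show aS * n₁ * aS = aS * n₁ * aS⁻¹ by rw [haHinv]]
      exact hH.conj_mem n₁ hn₁ aS
    · have hcoe : (((aS * n₁ * aS) * γ : ↥(SL2L L)) : SL2 K)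
          = (aMat s * (n₁ : SL2 K) * aMat s) * (γ : SL2 K) := rfl
      rw [hcoe, mul_entry]
      have hxm : ((aMat s * (n₁ : SL2 K) * aMat s : SL2 K) : Matrix (Fin 2) (Fin 2) K)
          = !![a + s*c, s*a + s*(s*c) + b + s*d; c, s*c + d] := by
        rw [Matrix.SpecialLinearGroup.coe_mul, Matrix.SpecialLinearGroup.coe_mul, hm]
        exact a_conj' s a b c d
      rw [hxm]
      show c * ((γ : SL2 K) : Matrix (Fin 2) (Fin 2) K) 0 0
          + (s*c + d) * ((γ : SL2 K) : Matrix (Fin 2) (Fin 2) K) 1 0 = 0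
      rw [hp, hd', hs]
      linear_combination (c * t * ((γ : SL2 K) : Matrix (Fin 2) (Fin 2) K) 1 0
        + z₀ * c * ((γ : SL2 K) : Matrix (Fin 2) (Fin 2) K) 1 0) * (two_zero (K := K))

def Usub (L : AddSubgroup K) : Subgroup ↥(SL2L L) where
  carrier := {γ | ∃ t : K, (γ : SL2 K) = aMat t}
  one_mem' := ⟨0, by rw [aMat_zero]; rfl⟩
  mul_mem' := by
    rintro x y ⟨t, ht⟩ ⟨u, hu⟩
    exact ⟨t + u, by
      rw [show ((x * y : ↥(SL2L L)) : SL2 K) = (x : SL2 K) * (y : SL2 K) from rfl, ht, hu,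
        aMat_mul]⟩
  inv_mem' := by
    rintro x ⟨t, ht⟩
    exact ⟨t, by
      rw [show ((x⁻¹ : ↥(SL2L L)) : SL2 K) = ((x : SL2 K))⁻¹ from rfl, ht, aMat_inv]⟩

lemma usub_comm {u v : ↥(SL2L L)} (hu : u ∈ Usub L) (hv : v ∈ Usub L) : u * v = v * u := by
  obtain ⟨t, ht⟩ := hu
  obtain ⟨r, hr⟩ := hv
  apply Subtype.ext
  rw [show ((u * v : ↥(SL2L L)) : SL2 K) = (u : SL2 K) * (v : SL2 K) from rfl,
    show ((v * u : ↥(SL2L L)) : SL2 K) = (v : SL2 K) * (u : SL2 K) from rfl, ht, hr,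
    aMat_mul, aMat_mul, add_comm]

lemma eq_top_of_gens (H : Subgroup ↥(SL2L L))
    (ha : ∀ t (ht : t ∈ L), (⟨aMat t, mem_a ht⟩ : ↥(SL2L L)) ∈ H)
    (hb : ∀ t (ht : t ∈ L), (⟨bMat t, mem_b ht⟩ : ↥(SL2L L)) ∈ H) : H = ⊤ := by
  rw [Subgroup.eq_top_iff']
  intro γ
  have hγ : (γ : SL2 K) ∈ Subgroup.map (SL2L L).subtype H := by
    suffices h : SL2L L ≤ Subgroup.map (SL2L L).subtype H from h γ.2
    show Subgroup.closure (setA L ∪ setAop L) ≤ _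
    rw [Subgroup.closure_le]
    rintro x (⟨t, ht, rfl⟩ | ⟨t, ht, rfl⟩)
    · exact ⟨⟨aMat t, mem_a ht⟩, ha t ht, rfl⟩
    · exact ⟨⟨bMat t, mem_b ht⟩, hb t ht, rfl⟩
  obtain ⟨δ, hδ, hcoe⟩ := hγ
  rwa [show δ = γ from Subtype.ext hcoe] at hδ

lemma exists_param (himperf : ¬ Function.Surjective fun x : K => x ^ 2)
    (hsq : ∀ x : K, x ^ 2 ∈ L) : ∃ s : K, s ∈ L ∧ s ≠ 0 ∧ s ≠ 1 := by
  have hinj : Function.Injective fun x : K => x ^ 2 := by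
    intro x y h
    simp only at h
    have h2 : (x - y) ^ 2 = 0 := by
      linear_combination h + (y * y - x * y) * (two_zero (K := K))
    have h3 := pow_eq_zero_iff (n := 2) (by norm_num) |>.mp h2
    linear_combination h3
  have : Infinite K := by
    by_contra hfin
    rw [not_infinite_iff_finite] at hfin
    exact himperf ((Finite.injective_iff_surjective).mp hinj)
  classical
  obtain ⟨x, hx⟩ := Infinite.exists_notMem_finset ({0, 1} : Finset K)
  simp only [Finset.mem_insert, Finset.mem_singleton, not_or] at hx
  refine ⟨x ^ 2, hsq x, pow_ne_zero _ hx.1, fun h => hx.2 ?_⟩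
  exact hinj (a₁ := x) (a₂ := 1) (by simpa using h)

lemma key_id (x u : K) (hx : x + 1 ≠ 0) :
    x^2 * ((x * (x+1)⁻¹)^2 * u) + (x * (x+1)⁻¹)^2 * u = x^2 * u := by
  have h1 : (x+1) * (x+1)⁻¹ = 1 := mul_inv_cancel₀ hx
  linear_combination (x^2*u*(x*(x+1)⁻¹ + (x+1)⁻¹ + 3)) * h1
    + (x^2*u*(1 - x*((x+1)⁻¹)^2 - x*(x+1)⁻¹ - (x+1)⁻¹)) * (two_zero (K := K))


theorem main_simple [CharP K 2] {L : AddSubgroup K}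
    (himperf : ¬ Function.Surjective fun x : K => x ^ 2)
    (hsq : ∀ x : K, x ^ 2 ∈ L)
    (hvs : ∀ s t : K, t ∈ L → s ^ 2 * t ∈ L) :
    IsSimpleGroup ↥(SL2L L) := by
  have h1 : (1:K) ∈ L := by have := hsq 1; rwa [one_pow] at this
  haveI : Nontrivial ↥(SL2L L) := by
    refine ⟨⟨⟨aMat 1, mem_a h1⟩, 1, fun h => ?_⟩⟩
    have h2 := congrArg (fun γ : ↥(SL2L L) => ((γ : SL2 K) : Matrix (Fin 2) (Fin 2) K) 0 1) h
    simp only at h2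
    have h3 : (1 : K) = 0 := by
      rw [show (((⟨aMat 1, mem_a h1⟩ : ↥(SL2L L)) : SL2 K) : Matrix (Fin 2) (Fin 2) K) 0 1
          = (1:K) from rfl] at h2
      rw [h2, show (((1 : ↥(SL2L L)) : SL2 K) : Matrix (Fin 2) (Fin 2) K) 0 1
          = (1 : Matrix (Fin 2) (Fin 2) K) 0 1 from rfl, Matrix.one_apply_ne (by decide)]
    exact one_ne_zero h3
  refine ⟨fun H hH => ?_⟩
  by_cases hbot : H = ⊥
  · exact Or.inl hbot
  refine Or.inr ?_
  haveI := hH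
  obtain ⟨n₁, hn₁, hc⟩ := exists_lowleft_ne h1 hH hbot
  set wH : ↥(SL2L L) := ⟨wMat K, mem_w h1⟩ with hwH
  -- the b-generators are products of elements of H and Usub
  have hbconj : ∀ t (ht : t ∈ L),
      (⟨bMat t, mem_b ht⟩ : ↥(SL2L L)) = wH * ⟨aMat t, mem_a ht⟩ * wH⁻¹ := by
    intro t ht
    apply Subtype.ext
    rw [show ((wH * ⟨aMat t, mem_a ht⟩ * wH⁻¹ : ↥(SL2L L)) : SL2 K)
        = wMat K * aMat t * (wMat K)⁻¹ from rfl, w_inv, w_a_w]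
  -- step c : H ⊔ Usub = ⊤
  have hsup : H ⊔ Usub L = ⊤ := by
    apply eq_top_of_gens
    · intro t ht
      exact Subgroup.mem_sup_right ⟨t, rfl⟩
    · intro t ht
      obtain ⟨m, hmH, hP⟩ := exists_mul_mem_P hvs hH hn₁ hc wH
      set hh : ↥(SL2L L) := m * wH with hhdef
      set aT : ↥(SL2L L) := ⟨aMat t, mem_a ht⟩ with haT
      have hconj : hh * aT * hh⁻¹ ∈ Usub L := by
        refine ⟨(((hh : SL2 K) : Matrix (Fin 2) (Fin 2) K) 0 0)^2 * t, ?_⟩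
        rw [show ((hh * aT * hh⁻¹ : ↥(SL2L L)) : SL2 K)
            = (hh : SL2 K) * aMat t * ((hh : SL2 K))⁻¹ from rfl]
        exact upper_conj _ hP t
      have hfact : (⟨bMat t, mem_b ht⟩ : ↥(SL2L L)) = m⁻¹ * (hh * aT * hh⁻¹) * m := by
        rw [hbconj t ht, hhdef, ← haT]
        group
      rw [hfact]
      exact mul_mem (mul_mem (Subgroup.mem_sup_left (inv_mem hmH))
        (Subgroup.mem_sup_right hconj)) (Subgroup.mem_sup_left hmH)
  -- step d : all commutators lie in H
  have hcomm : ∀ x y : ↥(SL2L L), ⁅x, y⁆ ∈ H := by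
    intro x y
    have hdecomp : ∀ z : ↥(SL2L L), ∃ h₀ u, h₀ ∈ H ∧ u ∈ Usub L ∧ z = h₀ * u := by
      intro z
      have hz : z ∈ (↑H * ↑(Usub L) : Set ↥(SL2L L)) := by
        rw [← Subgroup.normal_mul, hsup]
        trivial
      rw [Set.mem_mul] at hz
      obtain ⟨h₀, hh₀, u, hu, huz⟩ := hz
      exact ⟨h₀, u, hh₀, hu, huz.symm⟩
    obtain ⟨h₁, u₁, hh₁, hu₁, hx⟩ := hdecomp x
    obtain ⟨h₂, u₂, hh₂, hu₂, hy⟩ := hdecomp y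
    have e₁ : QuotientGroup.mk' H h₁ = 1 := by
      rw [QuotientGroup.mk'_apply, QuotientGroup.eq_one_iff]; exact hh₁
    have e₂ : QuotientGroup.mk' H h₂ = 1 := by
      rw [QuotientGroup.mk'_apply, QuotientGroup.eq_one_iff]; exact hh₂
    have hq : QuotientGroup.mk' H ⁅x, y⁆ = 1 := by
      rw [map_commutatorElement, hx, hy, _root_.map_mul, _root_.map_mul, e₁, e₂, one_mul, one_mul,
        ← map_commutatorElement, commutatorElement_eq_one_iff_mul_comm.mpr (usub_comm hu₁ hu₂),
        _root_.map_one]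
    rw [← QuotientGroup.eq_one_iff, ← QuotientGroup.mk'_apply]
    exact hq
  -- step e : all a-generators lie in H
  obtain ⟨s, hsL, hs0, hs1⟩ := exists_param himperf hsq
  have hs'0 : s + 1 ≠ 0 := by
    intro hc0
    apply hs1
    linear_combination hc0 - (two_zero (K := K))
  have hs'L : s + 1 ∈ L := L.add_mem hsL h1
  have hgenA : ∀ t (ht : t ∈ L), (⟨aMat t, mem_a ht⟩ : ↥(SL2L L)) ∈ H := by
    intro u hu
    set w₁ : K := (s * (s+1)⁻¹)^2 * u with hw₁
    set w₂ : K := ((s+1) * ((s+1)+1)⁻¹)^2 * u with hw₂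
    have hw₁L : w₁ ∈ L := hvs _ _ hu
    have hw₂L : w₂ ∈ L := hvs _ _ hu
    have hss : (s+1) + 1 ≠ 0 := by
      intro hc0
      apply hs0
      linear_combination hc0 - (two_zero (K := K))
    set dS : ↥(SL2L L) := ⟨diagMat (Units.mk0 s hs0), mem_diag h1 hvs hsL hs0⟩ with hdS
    set dS' : ↥(SL2L L) := ⟨diagMat (Units.mk0 (s+1) hs'0), mem_diag h1 hvs hs'L hs'0⟩ with hdS'
    set aW1 : ↥(SL2L L) := ⟨aMat w₁, mem_a hw₁L⟩ with haW1
    set aW2 : ↥(SL2L L) := ⟨aMat w₂, mem_a hw₂L⟩ with haW2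
    have key : (⟨aMat u, mem_a hu⟩ : ↥(SL2L L)) = ⁅dS, aW1⁆ * ⁅dS', aW2⁆ := by
      apply Subtype.ext
      rw [show ((⁅dS, aW1⁆ * ⁅dS', aW2⁆ : ↥(SL2L L)) : SL2 K)
          = ⁅diagMat (Units.mk0 s hs0), aMat w₁⁆ * ⁅diagMat (Units.mk0 (s+1) hs'0), aMat w₂⁆
          from rfl, diag_a_comm, diag_a_comm, aMat_mul]
      show aMat u = aMat (((Units.mk0 s hs0 : Kˣ) : K)^2 * w₁ + w₁
        + (((Units.mk0 (s+1) hs'0 : Kˣ) : K)^2 * w₂ + w₂))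
      rw [Units.val_mk0, Units.val_mk0]
      congr 1
      rw [hw₁, hw₂, key_id s u hs'0, key_id (s+1) u hss]
      linear_combination (- s^2*u - s*u) * (two_zero (K := K))
    rw [key]
    exact mul_mem (hcomm _ _) (hcomm _ _)
  -- step f/g : conclude
  apply eq_top_of_gens
  · exact hgenA
  · intro t ht
    rw [hbconj t ht]
    exact hH.conj_mem _ (hgenA t ht) wH

end Aux

/-- Timmesfeld's group `SL₂(L)` is a simple group. -/
theorem SL2L_isSimpleGroup
    [CharP K 2] (himperf : ¬ Function.Surjective fun x : K => x ^ 2)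
    (L : AddSubgroup K) (hsq : ∀ x : K, x ^ 2 ∈ L)
    (hvs : ∀ s t : K, t ∈ L → s ^ 2 * t ∈ L) :
    IsSimpleGroup ↥(SL2L L) := by
  exact main_simple himperf hsq hvs

end
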